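/- Let κ > 0 and a ∈ ℝ, and let f : ℝ → ℝ be twice differentiable on [a, ∞) with f(s) ≥ 0 and f″(s) ≥ κ²·f(s) for all s ≥ a, and with f(s) → 0 as s → ∞. Then f′(s) + κ·f(s) ≤ 0 for all s ≥ a, the function s ↦ e^{κs}·f(s) is antitone on [a, ∞), and consequently f(s) ≤ f(a)·e^{−κ(s−a)} for all s ≥ a. -/

import Mathlib

private lemma mono_Ici {c : ℝ} {F F' : ℝ → ℝ}
    (hF : ∀ s, c ≤ s → HasDerivAt F (F' s) s)
    (h0 : ∀ s, c ≤ s → 0 ≤ F' s) : MonotoneOn F (Set.Ici c) := by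
  apply monotoneOn_of_deriv_nonneg (convex_Ici c)
  · exact fun s hs => (hF s hs).continuousAt.continuousWithinAt
  · intro s hs
    rw [interior_Ici] at hs
    exact (hF s hs.le).differentiableAt.differentiableWithinAt
  · intro s hs
    rw [interior_Ici] at hs
    rw [(hF s hs.le).deriv]
    exact h0 s hs.le

private lemma anti_Ici {c : ℝ} {F F' : ℝ → ℝ}
    (hF : ∀ s, c ≤ s → HasDerivAt F (F' s) s)
    (h0 : ∀ s, c ≤ s → F' s ≤ 0) : AntitoneOn F (Set.Ici c) := by
  have := mono_Ici (F := fun s => -F s) (F' := fun s => -F' s)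
    (fun s hs => (hF s hs).neg) (fun s hs => neg_nonneg.2 (h0 s hs))
  intro x hx y hy hxy
  have := this hx hy hxy
  simpa using this

/-- Exponential decay from convexity: if `f ≥ 0`, `f'' ≥ κ²·f` on `[a, ∞)` and `f → 0`
at infinity, then `f' + κ·f ≤ 0` on `[a, ∞)`, `s ↦ e^{κs}·f(s)` is antitone on `[a, ∞)`,
and `f(s) ≤ f(a)·e^{−κ(s−a)}` for all `s ≥ a`. -/
theorem stmt_4
    (κ a : ℝ) (hκ : 0 < κ) (f f' f'' : ℝ → ℝ)
    (hd1 : ∀ s, a ≤ s → HasDerivAt f (f' s) s)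
    (hd2 : ∀ s, a ≤ s → HasDerivAt f' (f'' s) s)
    (hpos : ∀ s, a ≤ s → 0 ≤ f s)
    (hconv : ∀ s, a ≤ s → κ ^ 2 * f s ≤ f'' s)
    (hlim : Filter.Tendsto f Filter.atTop (nhds 0)) :
    (∀ s, a ≤ s → f' s + κ * f s ≤ 0) ∧
    AntitoneOn (fun s => Real.exp (κ * s) * f s) (Set.Ici a) ∧
    (∀ s, a ≤ s → f s ≤ f a * Real.exp (-κ * (s - a))) := by
  -- derivative of h s = exp(-(κ s)) (f' s + κ f s)
  have hdh : ∀ s, a ≤ s → HasDerivAt (fun s => Real.exp (-(κ*s)) * (f' s + κ * f s))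
      (Real.exp (-(κ*s)) * (f'' s - κ^2 * f s)) s := by
    intro s hs
    have h1 : HasDerivAt (fun s => Real.exp (-(κ*s))) (Real.exp (-(κ*s)) * (-κ)) s := by
      have : HasDerivAt (fun s : ℝ => -(κ*s)) (-κ) s := by
        exact (show HasDerivAt (fun s : ℝ => κ*s) κ s by simpa using (hasDerivAt_id s).const_mul κ).neg
      exact (Real.hasDerivAt_exp _).comp s this
    have h2 : HasDerivAt (fun s => f' s + κ * f s) (f'' s + κ * f' s) s :=
      (hd2 s hs).add ((hd1 s hs).const_mul κ)
    have := h1.mul h2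
    refine this.congr_deriv ?_
    ring
  -- h is monotone on Ici a
  have hmono : MonotoneOn (fun s => Real.exp (-(κ*s)) * (f' s + κ * f s)) (Set.Ici a) := by
    apply mono_Ici hdh
    intro s hs
    have := hconv s hs
    have he := (Real.exp_pos (-(κ*s))).le
    nlinarith
  have key : ∀ s, a ≤ s → f' s + κ * f s ≤ 0 := by
    intro s₀ hs₀
    by_contra hg
    push_neg at hg
    set c := Real.exp (-(κ*s₀)) * (f' s₀ + κ * f s₀) with hc_def
    have hc : 0 < c := mul_pos (Real.exp_pos _) hg
    -- G monotone on Ici s₀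
    have hdG : ∀ s, s₀ ≤ s → HasDerivAt
        (fun s => Real.exp (κ*s) * f s - c/(2*κ) * Real.exp (2*κ*s))
        (Real.exp (κ*s) * (f' s + κ * f s) - c * Real.exp (2*κ*s)) s := by
      intro s hs
      have has : a ≤ s := le_trans hs₀ hs
      have h1 : HasDerivAt (fun s => Real.exp (κ*s)) (Real.exp (κ*s) * κ) s := by
        exact (Real.hasDerivAt_exp _).comp s (by simpa using (hasDerivAt_id s).const_mul κ)
      have h2 := h1.mul (hd1 s has)
      have h3 : HasDerivAt (fun s => Real.exp (2*κ*s)) (Real.exp (2*κ*s) * (2*κ)) s := by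
        exact (Real.hasDerivAt_exp _).comp s (by simpa using (hasDerivAt_id s).const_mul (2*κ))
      have h4 := h2.sub (h3.const_mul (c/(2*κ)))
      refine h4.congr_deriv ?_
      field_simp
      ring
    have hG : MonotoneOn (fun s => Real.exp (κ*s) * f s - c/(2*κ) * Real.exp (2*κ*s))
        (Set.Ici s₀) := by
      apply mono_Ici hdG
      intro s hs
      have hm := hmono (Set.mem_Ici.2 hs₀) (Set.mem_Ici.2 (le_trans hs₀ hs)) hs
      -- c ≤ exp(-(κ s)) * (f' s + κ f s)
      have hE : Real.exp (2*κ*s) * Real.exp (-(κ*s)) = Real.exp (κ*s) := by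
        rw [← Real.exp_add]; ring_nf
      have he := (Real.exp_pos (2*κ*s)).le
      have h5 : c * Real.exp (2*κ*s) ≤ Real.exp (κ*s) * (f' s + κ * f s) := by
        calc c * Real.exp (2*κ*s)
            ≤ (Real.exp (-(κ*s)) * (f' s + κ * f s)) * Real.exp (2*κ*s) :=
              mul_le_mul_of_nonneg_right hm he
          _ = (Real.exp (2*κ*s) * Real.exp (-(κ*s))) * (f' s + κ * f s) := by ring
          _ = Real.exp (κ*s) * (f' s + κ * f s) := by rw [hE]
      linarith
    set K := Real.exp (κ*s₀) * f s₀ - c/(2*κ) * Real.exp (2*κ*s₀) with hK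
    -- lower bound for f
    have hbound : ∀ s, s₀ ≤ s → c/(2*κ) * Real.exp (κ*s) + K * Real.exp (-(κ*s)) ≤ f s := by
      intro s hs
      have := hG (Set.mem_Ici.2 le_rfl) (Set.mem_Ici.2 hs) hs
      have hE1 : Real.exp (2*κ*s) * Real.exp (-(κ*s)) = Real.exp (κ*s) := by
        rw [← Real.exp_add]; ring_nf
      have hE2 : Real.exp (κ*s) * Real.exp (-(κ*s)) = 1 := by
        rw [← Real.exp_add]; ring_nf; exact Real.exp_zero
      have he := (Real.exp_pos (-(κ*s))).le
      have h5 : K * Real.exp (-(κ*s)) ≤ f s - c/(2*κ) * Real.exp (κ*s) := by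
        calc K * Real.exp (-(κ*s))
            ≤ (Real.exp (κ*s) * f s - c/(2*κ) * Real.exp (2*κ*s)) * Real.exp (-(κ*s)) :=
              mul_le_mul_of_nonneg_right this he
          _ = f s * (Real.exp (κ*s) * Real.exp (-(κ*s)))
              - c/(2*κ) * (Real.exp (2*κ*s) * Real.exp (-(κ*s))) := by ring
          _ = f s - c/(2*κ) * Real.exp (κ*s) := by rw [hE1, hE2]; ring
      linarith
    have hB : Filter.Tendsto (fun s => c/(2*κ) * Real.exp (κ*s) + K * Real.exp (-(κ*s)))
        Filter.atTop Filter.atTop := by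
      have h1 : Filter.Tendsto (fun s : ℝ => κ*s) Filter.atTop Filter.atTop :=
        Filter.Tendsto.const_mul_atTop hκ Filter.tendsto_id
      have h2 : Filter.Tendsto (fun s : ℝ => c/(2*κ) * Real.exp (κ*s)) Filter.atTop
          Filter.atTop :=
        Filter.Tendsto.const_mul_atTop (by positivity) (Real.tendsto_exp_atTop.comp h1)
      have h3 : Filter.Tendsto (fun s : ℝ => K * Real.exp (-(κ*s))) Filter.atTop (nhds 0) := by
        have : Filter.Tendsto (fun s : ℝ => -(κ*s)) Filter.atTop Filter.atBot := by
          simpa using Filter.tendsto_neg_atBot_iff.2 h1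
        simpa using (Real.tendsto_exp_atBot.comp this).const_mul K
      simpa using h2.atTop_add h3
    have hfa : Filter.Tendsto f Filter.atTop Filter.atTop := by
      apply Filter.tendsto_atTop_mono' _ _ hB
      filter_upwards [Filter.eventually_ge_atTop s₀] with s hs
      exact hbound s hs
    exact not_tendsto_atTop_of_tendsto_nhds hlim hfa
  refine ⟨key, ?_, ?_⟩
  · apply anti_Ici (F' := fun s => Real.exp (κ*s) * (f' s + κ * f s))
    · intro s hs
      have h1 : HasDerivAt (fun s => Real.exp (κ*s)) (Real.exp (κ*s) * κ) s :=
        (Real.hasDerivAt_exp _).comp s (by simpa using (hasDerivAt_id s).const_mul κ)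
      have := h1.mul (hd1 s hs)
      refine this.congr_deriv ?_
      ring
    · intro s hs
      exact mul_nonpos_of_nonneg_of_nonpos (Real.exp_pos _).le (key s hs)
  · intro s hs
    have hant : AntitoneOn (fun s => Real.exp (κ * s) * f s) (Set.Ici a) := by
      apply anti_Ici (F' := fun s => Real.exp (κ*s) * (f' s + κ * f s))
      · intro s hs
        have h1 : HasDerivAt (fun s => Real.exp (κ*s)) (Real.exp (κ*s) * κ) s :=
          (Real.hasDerivAt_exp _).comp s (by simpa using (hasDerivAt_id s).const_mul κ)
        have := h1.mul (hd1 s hs)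
        refine this.congr_deriv ?_
        ring
      · intro s hs
        exact mul_nonpos_of_nonneg_of_nonpos (Real.exp_pos _).le (key s hs)
    have h := hant (Set.mem_Ici.2 le_rfl) (Set.mem_Ici.2 hs) hs
    have hE : Real.exp (κ*a) * Real.exp (-(κ*s)) = Real.exp (-κ*(s-a)) := by
      rw [← Real.exp_add]; ring_nf
    have hE2 : Real.exp (κ*s) * Real.exp (-(κ*s)) = 1 := by
      rw [← Real.exp_add]; ring_nf; exact Real.exp_zero
    have he := (Real.exp_pos (-(κ*s))).le
    calc f s = (Real.exp (κ*s) * f s) * Real.exp (-(κ*s)) := by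
          rw [mul_comm (Real.exp (κ*s)) (f s), mul_assoc, hE2, mul_one]
      _ ≤ (Real.exp (κ*a) * f a) * Real.exp (-(κ*s)) := mul_le_mul_of_nonneg_right h he
      _ = f a * (Real.exp (κ*a) * Real.exp (-(κ*s))) := by ring
      _ = f a * Real.exp (-κ*(s-a)) := by rw [hE]
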